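/- Let G be a graph on [n] and U ⊆ [n]. The iterative expansion procedure that repeatedly adds to the current set any single vertex outside it having at least two neighbors inside, until no such vertex exists, terminates with a set Ū ⊇ U such that every vertex of [n] \ Ū has at most one neighbor in Ū. Moreover, if at some stage the expanded set has size 3|U|, then the subgraph induced on it has at least (4/3) times its number of vertices in edges. -/

import Mathlib

open Finset


lemma ecount_insert {n : ℕ} (G : SimpleGraph (Fin n)) [DecidableRel G.Adj]
    (S : Finset (Fin n)) (v : Fin n) (hv : v ∉ S) :
    (∑ i ∈ insert v S, ∑ j ∈ insert v S, if i < j ∧ G.Adj i j then 1 else 0) =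
      (∑ i ∈ S, ∑ j ∈ S, if i < j ∧ G.Adj i j then 1 else 0) +
        (S.filter (fun u => G.Adj v u)).card := by
  rw [sum_insert hv, sum_insert hv]
  have h1 : ∀ i ∈ S, (∑ j ∈ insert v S, if i < j ∧ G.Adj i j then 1 else 0)
      = (if i < v ∧ G.Adj i v then 1 else 0) + ∑ j ∈ S, if i < j ∧ G.Adj i j then 1 else 0 :=
    fun i _ => sum_insert hv
  rw [sum_congr rfl h1, sum_add_distrib]
  have h2 : (if v < v ∧ G.Adj v v then 1 else 0) = 0 := by simp
  have h3 : (∑ j ∈ S, if v < j ∧ G.Adj v j then (1:ℕ) else 0)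
      + ∑ i ∈ S, (if i < v ∧ G.Adj i v then 1 else 0)
      = (S.filter (fun u => G.Adj v u)).card := by
    rw [← sum_add_distrib, card_filter]
    refine sum_congr rfl fun u hu => ?_
    have hne : v ≠ u := fun h => hv (h ▸ hu)
    rcases lt_trichotomy v u with h | h | h
    · simp [h, not_lt_of_gt h, G.adj_comm]
    · exact absurd h hne
    · simp [h, not_lt_of_gt h, G.adj_comm]
  omega

lemma luczak_aux {n : ℕ} (G : SimpleGraph (Fin n)) [DecidableRel G.Adj] :
    ∀ k (U : Finset (Fin n)), n ≤ U.card + k →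
    ∃ (m : ℕ) (seq : ℕ → Finset (Fin n)),
      seq 0 = U ∧
      (∀ ℓ < m, ∃ v, v ∉ seq ℓ ∧ 2 ≤ ((seq ℓ).filter (fun u => G.Adj v u)).card ∧
        seq (ℓ + 1) = insert v (seq ℓ)) ∧
      (∀ v, v ∉ seq m → ((seq m).filter (fun u => G.Adj v u)).card ≤ 1) ∧
      (∀ ℓ ≤ m, U ⊆ seq ℓ ∧ (seq ℓ).card = U.card + ℓ ∧
        (∑ i ∈ U, ∑ j ∈ U, if i < j ∧ G.Adj i j then 1 else 0) + 2 * ℓ ≤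
          ∑ i ∈ seq ℓ, ∑ j ∈ seq ℓ, if i < j ∧ G.Adj i j then 1 else 0) := by
  intro k
  induction k with
  | zero =>
    intro U hU
    by_cases h : ∃ v, v ∉ U ∧ 2 ≤ (U.filter (fun u => G.Adj v u)).card
    · obtain ⟨v, hv, -⟩ := h
      have : U.card < n := by
        have := card_lt_card (ssubset_insert hv)
        have := card_le_card (subset_univ (insert v U))
        simp [card_univ] at this
        omega
      omega
    · push_neg at h
      exact ⟨0, fun _ => U, rfl, by omega, fun v hv => by
          show (U.filter (fun u => G.Adj v u)).card ≤ 1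
          have := h v hv; omega,
        fun ℓ hℓ => by interval_cases ℓ; simp⟩
  | succ k ih =>
    intro U hU
    by_cases h : ∃ v, v ∉ U ∧ 2 ≤ (U.filter (fun u => G.Adj v u)).card
    · obtain ⟨v, hv, hdeg⟩ := h
      set U' := insert v U with hU'
      have hcard' : U'.card = U.card + 1 := card_insert_of_notMem hv
      obtain ⟨m', seq', h0', hstep', hstuck', hinv'⟩ := ih U' (by omega)
      refine ⟨m' + 1, fun ℓ => match ℓ with | 0 => U | (j+1) => seq' j, rfl, ?_, ?_, ?_⟩
      · intro ℓ hℓ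
        match ℓ with
        | 0 => exact ⟨v, hv, hdeg, by simp [h0', hU']⟩
        | (j+1) =>
          obtain ⟨w, hw1, hw2, hw3⟩ := hstep' j (by omega)
          exact ⟨w, hw1, hw2, hw3⟩
      · exact hstuck'
      · intro ℓ hℓ
        match ℓ with
        | 0 => simp
        | (j+1) =>
          obtain ⟨hsub, hc, he⟩ := hinv' j (by omega)
          have hE' := ecount_insert G U v hv
          have hE2 : (∑ i ∈ U', ∑ j ∈ U', if i < j ∧ G.Adj i j then 1 else 0) =
              (∑ i ∈ U, ∑ j ∈ U, if i < j ∧ G.Adj i j then 1 else 0)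
                + (U.filter (fun u => G.Adj v u)).card := hE'
          refine ⟨(subset_insert v U).trans hsub, ?_, ?_⟩
          · show (seq' j).card = U.card + (j + 1)
            omega
          · show (∑ i ∈ U, ∑ j ∈ U, if i < j ∧ G.Adj i j then 1 else 0) + 2 * (j + 1) ≤
              ∑ i ∈ seq' j, ∑ j ∈ seq' j, if i < j ∧ G.Adj i j then 1 else 0
            omega
    · push_neg at h
      exact ⟨0, fun _ => U, rfl, by omega, fun v hv => by
          show (U.filter (fun u => G.Adj v u)).card ≤ 1
          have := h v hv; omega,
        fun ℓ hℓ => by interval_cases ℓ; simp⟩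

/-- Łuczak expansion: for any graph `G` on `[n]` and any `U ⊆ [n]`, the
iterative procedure — repeatedly add a single vertex outside the current set having at
least two neighbors inside — terminates: there is a chain `U = seq 0 ⊆ ⋯ ⊆ seq m = Ū`
where each step inserts one such vertex, `Ū ⊇ U`, every vertex outside `Ū` has at most one
neighbor in `Ū`, and moreover at any stage `ℓ ≤ m` where the current set has size `3|U|`,
the induced subgraph on it has at least `(4/3)` times its number of vertices in edges. -/
theorem statement4 (n : ℕ) (G : SimpleGraph (Fin n)) [DecidableRel G.Adj]
    (U : Finset (Fin n)) :
    ∃ (m : ℕ) (seq : ℕ → Finset (Fin n)),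
      seq 0 = U ∧
      (∀ ℓ < m, ∃ v, v ∉ seq ℓ ∧ 2 ≤ ((seq ℓ).filter (fun u => G.Adj v u)).card ∧
        seq (ℓ + 1) = insert v (seq ℓ)) ∧
      U ⊆ seq m ∧
      (∀ v, v ∉ seq m → ((seq m).filter (fun u => G.Adj v u)).card ≤ 1) ∧
      (∀ ℓ ≤ m, (seq ℓ).card = 3 * U.card →
        (4 / 3 : ℝ) * (seq ℓ).card ≤
          ∑ i ∈ seq ℓ, ∑ j ∈ seq ℓ, (if i < j ∧ G.Adj i j then (1 : ℝ) else 0)) := by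
  obtain ⟨m, seq, h0, hstep, hstuck, hinv⟩ := luczak_aux G n U (by omega)
  refine ⟨m, seq, h0, hstep, (hinv m le_rfl).1, hstuck, ?_⟩
  intro ℓ hℓ hcard
  obtain ⟨-, hc, he⟩ := hinv ℓ hℓ
  have hℓeq : ℓ = 2 * U.card := by omega
  have hnat : 4 * U.card ≤
      ∑ i ∈ seq ℓ, ∑ j ∈ seq ℓ, if i < j ∧ G.Adj i j then 1 else 0 := by omega
  have hcast : ((∑ i ∈ seq ℓ, ∑ j ∈ seq ℓ, if i < j ∧ G.Adj i j then 1 else 0 : ℕ) : ℝ)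
      = ∑ i ∈ seq ℓ, ∑ j ∈ seq ℓ, (if i < j ∧ G.Adj i j then (1:ℝ) else 0) := by
    push_cast
    simp
  rw [← hcast, hcard]
  have h4 := (Nat.cast_le (α := ℝ)).mpr hnat
  push_cast at h4 ⊢
  linarith
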